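/- Let p, s ∈ (1,∞), Λ > 0, M > 0 and μ ∈ (0,1]. There exists a constant C̃ > 0, depending only on p, s, Λ, M and μ, with the following property: whenever A ∈ ℂ^{d×d}, b, c ∈ ℂ^d and V ≥ 0 real satisfy |⟨Aξ,σ⟩| ≤ Λ|ξ||σ| for all ξ, σ ∈ ℂ^d, |b − c| ≤ M√V, and Γ_p^{(A,b,c,V)}(ξ) ≥ μ(|ξ|² + V) for all ξ ∈ ℂ^d, then |b + 𝒥_s c| ≤ C̃ √V. -/

import Mathlib

open scoped ComplexConjugate

/-- The ℝ-linear operator `𝒥_p ξ = (p/2)(ξ + (1 − 2/p)·conj ξ)` on `ℂ^d`. -/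
noncomputable def Jmap (p : ℝ) {d : ℕ} (ξ : EuclideanSpace ℂ (Fin d)) :
    EuclideanSpace ℂ (Fin d) :=
  WithLp.toLp 2 (fun i => (p / 2 : ℂ) * (ξ i + ((1 - 2 / p : ℝ) : ℂ) * conj (ξ i)))

/-- The Hermitian inner product `⟨x,y⟩ = ∑ x i * conj (y i)`, linear in the first variable. -/
noncomputable def hip {d : ℕ} (x y : EuclideanSpace ℂ (Fin d)) : ℂ :=
  @inner ℂ _ _ y x

/-- A matrix acting on `ℂ^d`. -/
noncomputable def mulVecE {d : ℕ} (A : Matrix (Fin d) (Fin d) ℂ)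
    (ξ : EuclideanSpace ℂ (Fin d)) : EuclideanSpace ℂ (Fin d) :=
  WithLp.toLp 2 (fun i => A.mulVec (fun j => ξ j) i)

/-- `Γ_p^{(A,b,c,V)}(ξ) = Re⟨Aξ, 𝒥_p ξ⟩ + Re⟨b + 𝒥_p c, ξ⟩ + V`. -/
noncomputable def Gamma (p : ℝ) {d : ℕ} (A : Matrix (Fin d) (Fin d) ℂ)
    (b c : EuclideanSpace ℂ (Fin d)) (V : ℝ) (ξ : EuclideanSpace ℂ (Fin d)) : ℝ :=
  (hip (mulVecE A ξ) (Jmap p ξ)).re + (hip (b + Jmap p c) ξ).re + V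

lemma euclid_norm_le_of_pointwise {d : ℕ} {x y : EuclideanSpace ℂ (Fin d)} {K : ℝ}
    (hK : 0 ≤ K) (h : ∀ i, ‖x i‖ ≤ K * ‖y i‖) : ‖x‖ ≤ K * ‖y‖ := by
  rw [EuclideanSpace.norm_eq, EuclideanSpace.norm_eq, ← Real.sqrt_sq hK,
    ← Real.sqrt_mul (sq_nonneg K)]
  apply Real.sqrt_le_sqrt
  rw [Finset.mul_sum]
  refine Finset.sum_le_sum fun i _ => ?_
  calc ‖x i‖ ^ 2 ≤ (K * ‖y i‖) ^ 2 := pow_le_pow_left₀ (norm_nonneg _) (h i) 2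
    _ = K ^ 2 * ‖y i‖ ^ 2 := by ring

lemma jmap_norm_le (p : ℝ) (hp : 1 ≤ p) {d : ℕ} (ξ : EuclideanSpace ℂ (Fin d)) :
    ‖Jmap p ξ‖ ≤ p * ‖ξ‖ := by
  have hp0 : 0 < p := by linarith
  refine euclid_norm_le_of_pointwise (by linarith) fun i => ?_
  show ‖(p / 2 : ℂ) * (ξ i + ((1 - 2 / p : ℝ) : ℂ) * conj (ξ i))‖ ≤ p * ‖ξ i‖
  have hr : |1 - 2 / p| ≤ 1 := by
    rw [abs_le]
    constructor
    · have : 2 / p ≤ 2 := by rw [div_le_iff₀ hp0]; linarith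
      linarith
    · have : 0 < 2 / p := by positivity
      linarith
  have h1 : ‖(p / 2 : ℂ)‖ = p / 2 := by
    rw [show (p / 2 : ℂ) = ((p / 2 : ℝ) : ℂ) by push_cast; ring, Complex.norm_real,
      Real.norm_eq_abs, abs_of_pos (show (0:ℝ) < p / 2 by linarith)]
  have h2 : ‖ξ i + ((1 - 2 / p : ℝ) : ℂ) * conj (ξ i)‖ ≤ 2 * ‖ξ i‖ := by
    calc ‖ξ i + ((1 - 2 / p : ℝ) : ℂ) * conj (ξ i)‖
        ≤ ‖ξ i‖ + ‖((1 - 2 / p : ℝ) : ℂ) * conj (ξ i)‖ := norm_add_le _ _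
      _ = ‖ξ i‖ + |1 - 2 / p| * ‖ξ i‖ := by
          rw [norm_mul, Complex.norm_real, Real.norm_eq_abs, RCLike.norm_conj]
      _ ≤ ‖ξ i‖ + 1 * ‖ξ i‖ := by
          have := norm_nonneg (ξ i); nlinarith
      _ = 2 * ‖ξ i‖ := by ring
  calc ‖(p / 2 : ℂ) * (ξ i + ((1 - 2 / p : ℝ) : ℂ) * conj (ξ i))‖
      = (p / 2) * ‖ξ i + ((1 - 2 / p : ℝ) : ℂ) * conj (ξ i)‖ := by rw [norm_mul, h1]
    _ ≤ (p / 2) * (2 * ‖ξ i‖) := by nlinarith [norm_nonneg (ξ i)]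
    _ = p * ‖ξ i‖ := by ring

lemma id_add_jmap_lower (p : ℝ) (hp : 1 ≤ p) {d : ℕ} (c : EuclideanSpace ℂ (Fin d)) :
    ‖c‖ ≤ ‖c + Jmap p c‖ := by
  have hp0 : (0:ℝ) < p := by linarith
  have := euclid_norm_le_of_pointwise (x := c) (y := c + Jmap p c) (K := 1)
    zero_le_one ?_
  · linarith [this]
  intro i
  rw [one_mul]
  have hadd : (c + Jmap p c) i = c i + Jmap p c i := rfl
  rw [hadd]
  set z : ℂ := c i with hz
  have hJ : Jmap p c i = ((p / 2 : ℝ) : ℂ) * (z + ((1 - 2 / p : ℝ) : ℂ) * conj z) := by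
    show (p / 2 : ℂ) * (z + ((1 - 2 / p : ℝ) : ℂ) * conj z) = _
    push_cast; ring
  rw [hJ]
  set w : ℂ := z + ((p / 2 : ℝ) : ℂ) * (z + ((1 - 2 / p : ℝ) : ℂ) * conj z) with hw
  have hre : w.re = p * z.re := by
    simp only [hw, Complex.add_re, Complex.mul_re, Complex.ofReal_re, Complex.ofReal_im,
      Complex.add_im, Complex.mul_im, Complex.conj_re, Complex.conj_im]
    field_simp
    ring
  have him : w.im = 2 * z.im := by
    simp only [hw, Complex.add_re, Complex.mul_re, Complex.ofReal_re, Complex.ofReal_im,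
      Complex.add_im, Complex.mul_im, Complex.conj_re, Complex.conj_im]
    field_simp
    ring
  have hsq : ‖z‖ ^ 2 ≤ ‖w‖ ^ 2 := by
    rw [Complex.sq_norm, Complex.sq_norm,
      Complex.normSq_apply, Complex.normSq_apply, hre, him]
    nlinarith [sq_nonneg z.re, sq_nonneg z.im, mul_nonneg (show (0:ℝ) ≤ p ^ 2 - 1 by nlinarith) (sq_nonneg z.re)]
  have := pow_le_pow_iff_left₀ (norm_nonneg z) (norm_nonneg w) (two_ne_zero)
  exact this.mp hsq


set_option maxHeartbeats 1000000 in
theorem stmt3 (p s Λ M μ : ℝ) (hp : 1 < p) (hs : 1 < s)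
    (hΛ : 0 < Λ) (hM : 0 < M) (hμ0 : 0 < μ) (hμ1 : μ ≤ 1) :
    ∃ C : ℝ, 0 < C ∧
      ∀ (d : ℕ), 1 ≤ d →
        ∀ (A : Matrix (Fin d) (Fin d) ℂ) (b c : EuclideanSpace ℂ (Fin d)) (V : ℝ),
          0 ≤ V →
          (∀ ξ σ : EuclideanSpace ℂ (Fin d),
            ‖hip (mulVecE A ξ) σ‖ ≤ Λ * ‖ξ‖ * ‖σ‖) →
          ‖b - c‖ ≤ M * Real.sqrt V →
          (∀ ξ : EuclideanSpace ℂ (Fin d), μ * (‖ξ‖ ^ 2 + V) ≤ Gamma p A b c V ξ) →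
          ‖b + Jmap s c‖ ≤ C * Real.sqrt V := by
  have hp0 : (0:ℝ) < p := by linarith
  have hΛp : (0:ℝ) < Λ * p := by positivity
  set Cp : ℝ := 2 * Real.sqrt (Λ * p) with hCp
  have hCp0 : 0 ≤ Cp := by positivity
  refine ⟨M + (1 + s) * (Cp + M), by nlinarith, ?_⟩
  intro d _hd A b c V hV hA hbc hΓ
  set β : EuclideanSpace ℂ (Fin d) := b + Jmap p c with hβ
  set t : ℝ := 1 / (2 * Λ * p) with ht
  have ht0 : 0 < t := by positivity
  set ξ0 : EuclideanSpace ℂ (Fin d) := ((-t : ℝ) : ℂ) • β with hξ0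
  have hnorm0 : ‖ξ0‖ = t * ‖β‖ := by
    rw [hξ0, norm_smul, Complex.norm_real, Real.norm_eq_abs, abs_neg, abs_of_pos ht0]
  -- linear term
  have hipre : (hip β ξ0).re = -(t * ‖β‖ ^ 2) := by
    rw [hip, hξ0, inner_smul_left, Complex.conj_ofReal, inner_self_eq_norm_sq_to_K]
    norm_cast
    change (Complex.ofReal (-t) * Complex.ofReal (‖β‖ ^ 2)).re = _
    rw [← Complex.ofReal_mul, Complex.ofReal_re]
    ring
  -- A term
  have hAterm : (hip (mulVecE A ξ0) (Jmap p ξ0)).re ≤ Λ * p * ‖ξ0‖ ^ 2 := by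
    calc (hip (mulVecE A ξ0) (Jmap p ξ0)).re
        ≤ ‖hip (mulVecE A ξ0) (Jmap p ξ0)‖ := Complex.re_le_norm _
      _ ≤ Λ * ‖ξ0‖ * ‖Jmap p ξ0‖ := hA ξ0 (Jmap p ξ0)
      _ ≤ Λ * ‖ξ0‖ * (p * ‖ξ0‖) := by
          have h1 := jmap_norm_le p hp.le ξ0
          have h2 : 0 ≤ Λ * ‖ξ0‖ := by positivity
          exact mul_le_mul_of_nonneg_left h1 h2
      _ = Λ * p * ‖ξ0‖ ^ 2 := by ring
  have key := hΓ ξ0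
  rw [Gamma, ← hβ] at key
  have hΛpt : Λ * p * t = 1 / 2 := by
    rw [ht]; field_simp
  have hN2 : ‖β‖ ^ 2 ≤ 4 * (Λ * p) * V := by
    have h3 : μ * ((t * ‖β‖) ^ 2 + V) ≤ Λ * p * (t * ‖β‖) ^ 2 + (-(t * ‖β‖ ^ 2)) + V := by
      rw [← hnorm0]; linarith [key, hAterm, hipre]
    have h4 : 0 ≤ μ * (t * ‖β‖) ^ 2 := by positivity
    have h5 : 0 ≤ μ * V := by positivity
    -- t‖β‖² ≤ Λp t² ‖β‖² + V = (t/2)‖β‖² + V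
    have h6 : t * ‖β‖ ^ 2 ≤ (t / 2) * ‖β‖ ^ 2 + V := by nlinarith
    have h7 : (t / 2) * ‖β‖ ^ 2 ≤ V := by linarith
    have h8 : ‖β‖ ^ 2 ≤ 2 * V / t := by
      rw [le_div_iff₀ ht0]; linarith
    calc ‖β‖ ^ 2 ≤ 2 * V / t := h8
      _ = 4 * (Λ * p) * V := by rw [ht]; field_simp; ring
  have hβnorm : ‖β‖ ≤ Cp * Real.sqrt V := by
    have hsq : (Cp * Real.sqrt V) ^ 2 = 4 * (Λ * p) * V := by
      rw [hCp, mul_pow, mul_pow, Real.sq_sqrt hΛp.le, Real.sq_sqrt hV]; ring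
    nlinarith [norm_nonneg β, Real.sqrt_nonneg V, hCp0, hN2,
      mul_nonneg hCp0 (Real.sqrt_nonneg V)]
  have hcnorm : ‖c‖ ≤ (Cp + M) * Real.sqrt V := by
    have e1 : c + Jmap p c = β - (b - c) := by rw [hβ]; abel
    calc ‖c‖ ≤ ‖c + Jmap p c‖ := id_add_jmap_lower p hp.le c
      _ = ‖β - (b - c)‖ := by rw [e1]
      _ ≤ ‖β‖ + ‖b - c‖ := norm_sub_le _ _
      _ ≤ Cp * Real.sqrt V + M * Real.sqrt V := add_le_add hβnorm hbc
      _ = (Cp + M) * Real.sqrt V := by ring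
  have e2 : b + Jmap s c = (b - c) + (c + Jmap s c) := by abel
  calc ‖b + Jmap s c‖ = ‖(b - c) + (c + Jmap s c)‖ := by rw [← e2]
    _ ≤ ‖b - c‖ + ‖c + Jmap s c‖ := norm_add_le _ _
    _ ≤ M * Real.sqrt V + (1 + s) * ‖c‖ := by
        refine add_le_add hbc ?_
        calc ‖c + Jmap s c‖ ≤ ‖c‖ + ‖Jmap s c‖ := norm_add_le _ _
          _ ≤ ‖c‖ + s * ‖c‖ := by linarith [jmap_norm_le s hs.le c]
          _ = (1 + s) * ‖c‖ := by ring
    _ ≤ M * Real.sqrt V + (1 + s) * ((Cp + M) * Real.sqrt V) := by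
        have : (0:ℝ) ≤ 1 + s := by linarith
        nlinarith [hcnorm]
    _ = (M + (1 + s) * (Cp + M)) * Real.sqrt V := by ring
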